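/- Every element β of the braid group B_n can be written as β = U^{−1} V with U, V ∈ B_n^{+*}; that is, every braid is a left quotient of two dual positive braids. -/

import Mathlib

def braidRels (n : ℕ) : Set (FreeGroup ℕ) :=
  {r | (∃ i j : ℕ, 1 ≤ i ∧ i + 2 ≤ j ∧ j ≤ n - 1 ∧
          r = FreeGroup.of i * FreeGroup.of j * (FreeGroup.of i)⁻¹ * (FreeGroup.of j)⁻¹) ∨
       (∃ i : ℕ, 1 ≤ i ∧ i + 1 ≤ n - 1 ∧
          r = FreeGroup.of i * FreeGroup.of (i+1) * FreeGroup.of i *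
              (FreeGroup.of (i+1) * FreeGroup.of i * FreeGroup.of (i+1))⁻¹) ∨
       (∃ i : ℕ, (i = 0 ∨ n ≤ i) ∧ r = FreeGroup.of i)}

abbrev Braid (n : ℕ) := PresentedGroup (braidRels n)

def genσ (n i : ℕ) : Braid n := PresentedGroup.of i

lemma braid_rel_one {n : ℕ} {r : FreeGroup ℕ} (hr : r ∈ braidRels n) :
    PresentedGroup.mk (braidRels n) r = 1 :=
  (QuotientGroup.eq_one_iff r).mpr (Subgroup.subset_normalClosure hr)

lemma genσ_bad {n i : ℕ} (h : i = 0 ∨ n ≤ i) : genσ n i = 1 :=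
  braid_rel_one (Or.inr (Or.inr ⟨i, h, rfl⟩))

lemma genσ_comm_rel {n i j : ℕ} (h1 : 1 ≤ i) (h2 : i + 2 ≤ j) (h3 : j ≤ n - 1) :
    genσ n i * genσ n j = genσ n j * genσ n i := by
  have h := braid_rel_one (n := n) (Or.inl ⟨i, j, h1, h2, h3, rfl⟩)
  simp only [map_mul, map_inv] at h
  change genσ n i * genσ n j * (genσ n i)⁻¹ * (genσ n j)⁻¹ = 1 at h
  rw [mul_inv_eq_one, mul_inv_eq_iff_eq_mul] at h
  exact h

lemma genσ_braid_rel {n i : ℕ} (h1 : 1 ≤ i) (h2 : i + 1 ≤ n - 1) :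
    genσ n i * genσ n (i+1) * genσ n i = genσ n (i+1) * genσ n i * genσ n (i+1) := by
  have h := braid_rel_one (n := n) (Or.inr (Or.inl ⟨i, h1, h2, rfl⟩))
  simp only [map_mul, map_inv] at h
  change genσ n i * genσ n (i+1) * genσ n i *
      (genσ n (i+1) * genσ n i * genσ n (i+1))⁻¹ = 1 at h
  rwa [mul_inv_eq_one] at h

/-- Unconditional commutation for far-apart indices. -/
lemma genσ_comm {n i j : ℕ} (h2 : i + 2 ≤ j) :
    genσ n i * genσ n j = genσ n j * genσ n i := by
  rcases Nat.eq_zero_or_pos i with hi | hi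
  · subst hi; rw [genσ_bad (Or.inl rfl)]; simp
  rcases le_or_gt n j with hj | hj
  · rw [genσ_bad (n := n) (i := j) (Or.inr hj)]; simp
  · exact genσ_comm_rel hi h2 (by omega)

section Main
variable (n : ℕ)

/-- `del m = σ_1 σ_2 ⋯ σ_m`. -/
def del : ℕ → Braid n
  | 0 => 1
  | m+1 => del m * genσ n (m+1)

/-- `del' m = σ_m ⋯ σ_2 σ_1`. -/
def del' : ℕ → Braid n
  | 0 => 1
  | m+1 => genσ n (m+1) * del' m

/-- `Del m` is the half-twist on indices `1..m`. -/
def Del : ℕ → Braid n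
  | 0 => 1
  | m+1 => del n (m+1) * Del m

variable {n}

lemma genσ_del_comm {m k : ℕ} (h : m + 2 ≤ k) :
    genσ n k * del n m = del n m * genσ n k := by
  induction m with
  | zero => simp [del]
  | succ m ih =>
    rw [del, ← mul_assoc, ih (by omega), mul_assoc,
      ← genσ_comm (show m + 1 + 2 ≤ k by omega), ← mul_assoc]

lemma genσ_del'_comm {m k : ℕ} (h : m + 2 ≤ k) :
    genσ n k * del' n m = del' n m * genσ n k := by
  induction m with
  | zero => simp [del']
  | succ m ih =>
    rw [del', ← mul_assoc, ← genσ_comm (show m + 1 + 2 ≤ k by omega),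
      mul_assoc, ih (by omega), ← mul_assoc]

lemma genσ_Del_comm {m k : ℕ} (h : m + 2 ≤ k) :
    genσ n k * Del n m = Del n m * genσ n k := by
  induction m with
  | zero => simp [Del]
  | succ m ih =>
    rw [Del, ← mul_assoc, genσ_del_comm (by omega), mul_assoc, ih (by omega), mul_assoc]

/-- `δ_m σ_i = σ_{i+1} δ_m` for `1 ≤ i < m ≤ n-1`. -/
lemma del_genσ {m i : ℕ} (hm : m ≤ n - 1) (hi : 1 ≤ i) (him : i < m) :
    del n m * genσ n i = genσ n (i+1) * del n m := by
  induction m with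
  | zero => omega
  | succ m ih =>
    rcases lt_or_eq_of_le (Nat.lt_succ_iff.mp him) with hlt | heq
    · rw [del, mul_assoc, ← genσ_comm (show i + 2 ≤ m + 1 by omega),
        ← mul_assoc, ih (by omega) hlt, mul_assoc]
    · subst heq
      obtain ⟨m', rfl⟩ : ∃ m', i = m' + 1 := ⟨i - 1, by omega⟩
      calc del n (m'+2) * genσ n (m'+1)
          = del n m' * (genσ n (m'+1) * genσ n (m'+2) * genσ n (m'+1)) := by
            rw [del, del]; group
        _ = del n m' * (genσ n (m'+2) * genσ n (m'+1) * genσ n (m'+2)) := by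
            rw [genσ_braid_rel (by omega) (by omega)]
        _ = (del n m' * genσ n (m'+2)) * (genσ n (m'+1) * genσ n (m'+2)) := by group
        _ = (genσ n (m'+2) * del n m') * (genσ n (m'+1) * genσ n (m'+2)) := by
            rw [← genσ_del_comm (by omega)]
        _ = genσ n (m'+1+1) * del n (m'+2) := by rw [del, del]; group

/-- `σ_i δ'_m = δ'_m σ_{i+1}` for `1 ≤ i < m ≤ n-1`. -/
lemma genσ_del' {m i : ℕ} (hm : m ≤ n - 1) (hi : 1 ≤ i) (him : i < m) :
    genσ n i * del' n m = del' n m * genσ n (i+1) := by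
  induction m with
  | zero => omega
  | succ m ih =>
    rcases lt_or_eq_of_le (Nat.lt_succ_iff.mp him) with hlt | heq
    · rw [del', ← mul_assoc, genσ_comm (show i + 2 ≤ m + 1 by omega),
        mul_assoc, ih (by omega) hlt, ← mul_assoc]
    · subst heq
      obtain ⟨m', rfl⟩ : ∃ m', i = m' + 1 := ⟨i - 1, by omega⟩
      calc genσ n (m'+1) * del' n (m'+2)
          = (genσ n (m'+1) * genσ n (m'+2) * genσ n (m'+1)) * del' n m' := by
            rw [del', del']; group
        _ = (genσ n (m'+2) * genσ n (m'+1) * genσ n (m'+2)) * del' n m' := by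
            rw [genσ_braid_rel (by omega) (by omega)]
        _ = genσ n (m'+2) * genσ n (m'+1) * (genσ n (m'+2) * del' n m') := by group
        _ = genσ n (m'+2) * genσ n (m'+1) * (del' n m' * genσ n (m'+2)) := by
            rw [genσ_del'_comm (by omega)]
        _ = del' n (m'+2) * genσ n (m'+1+1) := by rw [del', del']; group

/-- Two decompositions of the half twist. -/
lemma Del_succ' (m : ℕ) : Del n (m+1) = Del n m * del' n (m+1) := by
  induction m with
  | zero => simp [Del, del, del']
  | succ m ih =>
    calc Del n (m+2) = del n (m+2) * Del n (m+1) := rfl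
      _ = del n (m+1) * genσ n (m+2) * (Del n m * del' n (m+1)) := by rw [del, ih]
      _ = del n (m+1) * (genσ n (m+2) * Del n m) * del' n (m+1) := by group
      _ = del n (m+1) * (Del n m * genσ n (m+2)) * del' n (m+1) := by
          rw [genσ_Del_comm (by omega)]
      _ = (del n (m+1) * Del n m) * (genσ n (m+2) * del' n (m+1)) := by group
      _ = Del n (m+1) * del' n (m+2) := by
          rw [show del' n (m+2) = genσ n (m+2) * del' n (m+1) from rfl,
            show Del n (m+1) = del n (m+1) * Del n m from rfl]

/-- Half-twist conjugation: `Δ_m σ_i = σ_{m+1-i} Δ_m` for `1 ≤ i ≤ m ≤ n-1`. -/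
lemma Del_genσ {m : ℕ} (hm : m ≤ n - 1) :
    ∀ i, 1 ≤ i → i ≤ m → Del n m * genσ n i = genσ n (m+1-i) * Del n m := by
  induction m with
  | zero => omega
  | succ m ih =>
    intro i hi him
    rcases lt_or_eq_of_le him with hlt | heq
    · have h1 : i ≤ m := by omega
      rw [Del, mul_assoc, ih (by omega) i hi h1, ← mul_assoc,
        del_genσ hm (by omega) (by omega), show m + 1 - i + 1 = m + 1 + 1 - i by omega,
        mul_assoc]
    · subst heq
      rcases Nat.eq_zero_or_pos m with h0 | h1
      · subst h0
        show Del n 1 * genσ n 1 = genσ n 1 * Del n 1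
        have : Del n 1 = genσ n 1 := by simp [Del, del]
        rw [this]
      · have e1 : del' n (m+1) * genσ n (m+1) = genσ n m * del' n (m+1) :=
          (genσ_del' hm h1 (by omega)).symm
        calc Del n (m+1) * genσ n (m+1)
            = Del n m * (del' n (m+1) * genσ n (m+1)) := by rw [Del_succ', mul_assoc]
          _ = Del n m * (genσ n m * del' n (m+1)) := by rw [e1]
          _ = (Del n m * genσ n m) * del' n (m+1) := by group
          _ = (genσ n 1 * Del n m) * del' n (m+1) := by
              rw [ih (by omega) m h1 le_rfl, show m + 1 - m = 1 by omega]
          _ = genσ n (m+1+1-(m+1)) * Del n (m+1) := by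
              rw [show m+1+1-(m+1) = 1 by omega, Del_succ']; group

variable (n)
/-- The classical positive monoid. -/
def posMonoid : Submonoid (Braid n) :=
  Submonoid.closure {x | ∃ i : ℕ, 1 ≤ i ∧ i ≤ n - 1 ∧ x = genσ n i}
variable {n}

lemma genσ_mem_pos (i : ℕ) : genσ n i ∈ posMonoid n := by
  rcases Nat.eq_zero_or_pos i with h | h
  · subst h; rw [genσ_bad (Or.inl rfl)]; exact one_mem _
  rcases le_or_gt n i with h2 | h2
  · rw [genσ_bad (Or.inr h2)]; exact one_mem _
  · exact Submonoid.subset_closure ⟨i, h, by omega, rfl⟩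

lemma del_mem_pos (m : ℕ) : del n m ∈ posMonoid n := by
  induction m with
  | zero => exact one_mem _
  | succ m ih => exact mul_mem ih (genσ_mem_pos _)

lemma Del_mem_pos (m : ℕ) : Del n m ∈ posMonoid n := by
  induction m with
  | zero => exact one_mem _
  | succ m ih => exact mul_mem (del_mem_pos _) ih

lemma del_head {k : ℕ} (hk : 1 ≤ k) :
    ∃ t ∈ posMonoid n, del n k = genσ n 1 * t := by
  induction k with
  | zero => omega
  | succ k ihk =>
    rcases Nat.eq_zero_or_pos k with e | e
    · subst e; exact ⟨1, one_mem _, by simp [del]⟩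
    · obtain ⟨t, ht, he⟩ := ihk e
      exact ⟨t * genσ n (k+1), mul_mem ht (genσ_mem_pos _), by rw [del, he, mul_assoc]⟩

/-- `σ_j` left-divides `Δ_m` in the positive monoid, `1 ≤ j ≤ m ≤ n-1`. -/
lemma Del_left_div {m : ℕ} (hm : m ≤ n - 1) :
    ∀ j, 1 ≤ j → j ≤ m → ∃ V ∈ posMonoid n, Del n m = genσ n j * V := by
  induction m with
  | zero => omega
  | succ m ih =>
    intro j hj hjm
    rcases le_or_gt j 1 with hj1 | hj1
    · have : j = 1 := by omega
      subst this
      obtain ⟨t, ht, he⟩ := del_head (n := n) (k := m+1) (by omega)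
      exact ⟨t * Del n m, mul_mem ht (Del_mem_pos _), by rw [Del, he, mul_assoc]⟩
    · obtain ⟨V, hV, he⟩ := ih (by omega) (j-1) (by omega) (by omega)
      refine ⟨del n (m+1) * V, mul_mem (del_mem_pos _) hV, ?_⟩
      calc Del n (m+1) = del n (m+1) * (genσ n (j-1) * V) := by rw [Del, he]
        _ = (del n (m+1) * genσ n (j-1)) * V := by group
        _ = (genσ n (j-1+1) * del n (m+1)) * V := by
            rw [del_genσ hm (by omega) (by omega)]
        _ = genσ n j * (del n (m+1) * V) := by
            rw [show j - 1 + 1 = j by omega]; group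

variable (n) in
/-- The half twist `Δ`. -/
noncomputable def HalfTwist : Braid n := Del n (n-1)

lemma HalfTwist_mem_pos : HalfTwist n ∈ posMonoid n := Del_mem_pos _

lemma HalfTwist_conj {i : ℕ} (h1 : 1 ≤ i) (h2 : i ≤ n - 1) :
    HalfTwist n * genσ n i = genσ n (n-i) * HalfTwist n := by
  have := Del_genσ (n := n) (m := n-1) le_rfl i h1 h2
  rwa [show n - 1 + 1 - i = n - i by omega] at this

lemma HalfTwist_conj_mem {P : Braid n} (hP : P ∈ posMonoid n) :
    HalfTwist n * P * (HalfTwist n)⁻¹ ∈ posMonoid n := by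
  induction hP using Submonoid.closure_induction with
  | mem x hx =>
    obtain ⟨i, h1, h2, rfl⟩ := hx
    rw [HalfTwist_conj h1 h2]
    have : genσ n (n-i) * HalfTwist n * (HalfTwist n)⁻¹ = genσ n (n-i) := by group
    rw [this]; exact genσ_mem_pos _
  | one =>
    have : HalfTwist n * 1 * (HalfTwist n)⁻¹ = 1 := by group
    rw [this]; exact one_mem _
  | mul x y _ _ hx hy =>
    have : HalfTwist n * (x * y) * (HalfTwist n)⁻¹ =
        (HalfTwist n * x * (HalfTwist n)⁻¹) * (HalfTwist n * y * (HalfTwist n)⁻¹) := by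
      group
    rw [this]; exact mul_mem hx hy

lemma HalfTwist_pow_conj_mem {k : ℕ} {P : Braid n} (hP : P ∈ posMonoid n) :
    (HalfTwist n)^k * P * ((HalfTwist n)^k)⁻¹ ∈ posMonoid n := by
  induction k with
  | zero => simpa using hP
  | succ k ih =>
    have : (HalfTwist n)^(k+1) * P * ((HalfTwist n)^(k+1))⁻¹ =
        (HalfTwist n) * ((HalfTwist n)^k * P * ((HalfTwist n)^k)⁻¹) * (HalfTwist n)⁻¹ := by
      rw [pow_succ']; group
    rw [this]; exact HalfTwist_conj_mem ih

lemma HalfTwist_genσ_inv_mem {i : ℕ} (h1 : 1 ≤ i) (h2 : i ≤ n - 1) :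
    HalfTwist n * (genσ n i)⁻¹ ∈ posMonoid n := by
  obtain ⟨V, hV, he⟩ := Del_left_div (n := n) (m := n-1) le_rfl (n-i) (by omega) (by omega)
  have key : HalfTwist n * (genσ n i)⁻¹ = V := by
    have h := HalfTwist_conj h1 h2
    have : HalfTwist n * (genσ n i)⁻¹ = (genσ n (n-i))⁻¹ * HalfTwist n := by
      rw [eq_comm, inv_mul_eq_iff_eq_mul, ← mul_assoc, ← h]; group
    rw [this, show HalfTwist n = Del n (n-1) from rfl, he]; group
  rw [key]; exact hV

/-- For every positive `P` there is `k` with `Δ^k P⁻¹` positive. -/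
lemma pos_inv_dominated {P : Braid n} (hP : P ∈ posMonoid n) :
    ∃ k : ℕ, (HalfTwist n)^k * P⁻¹ ∈ posMonoid n := by
  induction hP using Submonoid.closure_induction with
  | mem x hx =>
    obtain ⟨i, h1, h2, rfl⟩ := hx
    exact ⟨1, by simpa using HalfTwist_genσ_inv_mem h1 h2⟩
  | one => exact ⟨0, by simpa using one_mem _⟩
  | mul x y _ _ hx hy =>
    obtain ⟨k, hk⟩ := hx
    obtain ⟨l, hl⟩ := hy
    refine ⟨k + l, ?_⟩
    have : (HalfTwist n)^(k+l) * (x*y)⁻¹ =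
        ((HalfTwist n)^k * ((HalfTwist n)^l * y⁻¹) * ((HalfTwist n)^k)⁻¹) *
          ((HalfTwist n)^k * x⁻¹) := by
      rw [pow_add]; group
    rw [this]
    exact mul_mem (HalfTwist_pow_conj_mem hl) hk

variable (n) in
/-- The subgroup of quotients. -/
noncomputable def quotSub : Subgroup (Braid n) where
  carrier := {β | ∃ k : ℕ, (HalfTwist n)^k * β ∈ posMonoid n}
  one_mem' := ⟨0, by simpa using one_mem _⟩
  mul_mem' := by
    rintro a b ⟨k, hk⟩ ⟨l, hl⟩
    refine ⟨l + k, ?_⟩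
    have : (HalfTwist n)^(l+k) * (a*b) =
        ((HalfTwist n)^l * ((HalfTwist n)^k * a) * ((HalfTwist n)^l)⁻¹) *
          ((HalfTwist n)^l * b) := by
      rw [pow_add]; group
    rw [this]
    exact mul_mem (HalfTwist_pow_conj_mem hk) hl
  inv_mem' := by
    rintro a ⟨k, hk⟩
    obtain ⟨l, hl⟩ := pos_inv_dominated hk
    refine ⟨l, ?_⟩
    have : (HalfTwist n)^l * a⁻¹ =
        ((HalfTwist n)^l * ((HalfTwist n)^k * a)⁻¹) * (HalfTwist n)^k := by
      group
    rw [this]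
    exact mul_mem hl (pow_mem HalfTwist_mem_pos _)

lemma quotSub_top (β : Braid n) : β ∈ quotSub n := by
  refine PresentedGroup.generated_by _ _ (fun j => ?_) β
  exact ⟨0, by simpa [genσ] using genσ_mem_pos (n := n) j⟩

end Main

def band (n i j : ℕ) : Braid n :=
  (((List.range' (i+1) (j-1-i)).reverse.map (genσ n)).prod) * genσ n i *
    (((List.range' (i+1) (j-1-i)).reverse.map (genσ n)).prod)⁻¹

def dualMonoid (n : ℕ) : Submonoid (Braid n) :=
  Submonoid.closure {x | ∃ i j : ℕ, 1 ≤ i ∧ i < j ∧ j ≤ n ∧ x = band n i j}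

def dualMonoidOn (n : ℕ) (I : Set ℕ) : Submonoid (Braid n) :=
  Submonoid.closure {x | ∃ i j : ℕ, i ∈ I ∧ j ∈ I ∧ 1 ≤ i ∧ i < j ∧ j ≤ n ∧ x = band n i j}

def evalWord (n : ℕ) (w : List (ℕ × Bool)) : Braid n :=
  (w.map (fun p => if p.2 then genσ n p.1 else (genσ n p.1)⁻¹)).prod

def SigmaPositive (n i : ℕ) (γ : Braid n) : Prop :=
  ∃ w : List (ℕ × Bool),
    (∀ p ∈ w, 1 ≤ p.1 ∧ p.1 ≤ n - 1) ∧
    (i, true) ∈ w ∧ (i, false) ∉ w ∧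
    (∀ p ∈ w, i ≤ p.1) ∧
    evalWord n w = γ

def dehornoyLt (n : ℕ) (α β : Braid n) : Prop :=
  ∃ i : ℕ, 1 ≤ i ∧ i ≤ n - 1 ∧ SigmaPositive n i (α⁻¹ * β)

lemma band_succ (n i : ℕ) : band n i (i+1) = genσ n i := by
  simp [band]

lemma pos_le_dual {n : ℕ} : posMonoid n ≤ dualMonoid n := by
  rw [posMonoid, Submonoid.closure_le]
  rintro x ⟨i, h1, h2, rfl⟩
  rw [← band_succ n i]
  exact Submonoid.subset_closure ⟨i, i+1, h1, by omega, by omega, rfl⟩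

/-- Theorem: every braid is a left quotient of two dual positive braids:
every `β ∈ B_n` can be written `β = U⁻¹ V` with `U, V ∈ B_n^{+*}`. -/
theorem braid_left_quotient_dual (n : ℕ) (hn : 2 ≤ n) (β : Braid n) :
    ∃ U V : Braid n, U ∈ dualMonoid n ∧ V ∈ dualMonoid n ∧ β = U⁻¹ * V := by
  obtain ⟨k, hk⟩ := quotSub_top β
  refine ⟨(HalfTwist n)^k, (HalfTwist n)^k * β,
    pos_le_dual (pow_mem HalfTwist_mem_pos _), pos_le_dual hk, by group⟩
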